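/- The constant B in the Hadamard product for ξ satisfies B = log 2 + (1/2) log π − 1 − γ/2, where γ is the Euler–Mascheroni constant; equivalently, evaluating ζ'(s)/ζ(s) = B − 1/(s−1) + (1/2) log π − (1/2) ψ(s/2 + 1) + Σ_ρ (1/(s−ρ) + 1/ρ) at s = 0, using ζ'(0)/ζ(0) = log(2π), yields this value of B. -/

import Mathlib

open Complex Real

/-- The digamma function ψ = Γ'/Γ. -/
noncomputable def digamma (z : ℂ) : ℂ := deriv Complex.Gamma z / Complex.Gamma z

open Filter Topology in
lemma aux_lambda0_one : completedRiemannZeta₀ 1 =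
    (Real.eulerMascheroniConstant : ℂ) -
      ((Real.eulerMascheroniConstant : ℂ) + Real.log (4 * π)) / 2 + 1 := by
  have hΓ1 := Complex.hasDerivAt_Gammaℝ_one
  -- limit of Λ₀ itself
  have hA : Tendsto completedRiemannZeta₀ (𝓝[≠] (1 : ℂ)) (𝓝 (completedRiemannZeta₀ 1)) :=
    ((differentiable_completedZeta₀ 1).continuousAt.tendsto).mono_left nhdsWithin_le_nhds
  -- limit of the explicit expression
  have t1 : Tendsto Gammaℝ (𝓝[≠] (1 : ℂ)) (𝓝 1) := by
    simpa [Complex.Gammaℝ_one] using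
      (hΓ1.differentiableAt.continuousAt.tendsto).mono_left nhdsWithin_le_nhds
  have t2 := tendsto_riemannZeta_sub_one_div
  have hΓ1' : HasDerivAt Gammaℝ
      (-((Real.eulerMascheroniConstant : ℂ) + Real.log (4 * π)) / 2) 1 := by
    have hc : (Real.log (4 * π) : ℂ) = Complex.log (4 * ↑π) := by
      rw [Complex.ofReal_log (by positivity)]; push_cast; ring_nf
    rw [hc]; exact hΓ1
  have t3 : Tendsto (fun s : ℂ => (Gammaℝ s - Gammaℝ 1) / (s - 1)) (𝓝[≠] (1 : ℂ))
      (𝓝 (-((Real.eulerMascheroniConstant : ℂ) + Real.log (4 * π)) / 2)) := by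
    have := hasDerivAt_iff_tendsto_slope.mp hΓ1'
    simpa [slope_fun_def, div_eq_mul_inv, mul_comm] using this
  have t4 : Tendsto (fun s : ℂ => 1 / s) (𝓝[≠] (1 : ℂ)) (𝓝 1) := by
    have : Tendsto (fun s : ℂ => 1 / s) (𝓝 (1 : ℂ)) (𝓝 (1 / 1)) :=
      (continuousAt_const.div continuousAt_id one_ne_zero).tendsto
    simpa using this.mono_left nhdsWithin_le_nhds
  have hB : Tendsto (fun s : ℂ => Gammaℝ s * (riemannZeta s - 1 / (s - 1)) +
      (Gammaℝ s - Gammaℝ 1) / (s - 1) + 1 / s) (𝓝[≠] (1 : ℂ))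
      (𝓝 (1 * (Real.eulerMascheroniConstant : ℂ) +
        -((Real.eulerMascheroniConstant : ℂ) + Real.log (4 * π)) / 2 + 1)) :=
    ((t1.mul t2).add t3).add t4
  -- the two functions agree near 1
  have hEq : ∀ᶠ s in 𝓝[≠] (1 : ℂ), Gammaℝ s * (riemannZeta s - 1 / (s - 1)) +
      (Gammaℝ s - Gammaℝ 1) / (s - 1) + 1 / s = completedRiemannZeta₀ s := by
    have hball : Metric.ball (1 : ℂ) (1 / 2) ∈ 𝓝[≠] (1 : ℂ) :=
      nhdsWithin_le_nhds (Metric.ball_mem_nhds _ (by norm_num))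
    filter_upwards [hball, self_mem_nhdsWithin] with s hs hs1
    have hs1' : s ≠ 1 := hs1
    have hnorm : ‖s - 1‖ < 1 / 2 := by
      simpa [Complex.dist_eq] using hs
    have hs0 : s ≠ 0 := by
      intro h; rw [h] at hnorm; norm_num at hnorm
    have hre : 0 < s.re := by
      have h1 : |(s - 1).re| ≤ ‖s - 1‖ := Complex.abs_re_le_norm _
      have : (s - 1).re = s.re - 1 := by simp
      rw [this] at h1
      have := abs_le.mp h1
      linarith [this.1, hnorm]
    have hΓne : Gammaℝ s ≠ 0 := Complex.Gammaℝ_ne_zero_of_re_pos hre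
    have hζ : riemannZeta s = completedRiemannZeta s / Gammaℝ s :=
      riemannZeta_def_of_ne_zero hs0
    have e1 := completedRiemannZeta_eq s
    have hΛ : completedRiemannZeta s = Gammaℝ s * riemannZeta s := by
      rw [hζ, mul_div_cancel₀ _ hΓne]
    have e2 : completedRiemannZeta₀ s = Gammaℝ s * riemannZeta s + 1 / s + 1 / (1 - s) := by
      linear_combination hΛ - e1
    have h3 : 1 / ((1 : ℂ) - s) = -(1 / (s - 1)) := by
      rw [show (1 : ℂ) - s = -(s - 1) by ring, div_neg]
    rw [Complex.Gammaℝ_one, e2, h3]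
    ring
  have := tendsto_nhds_unique (hB.congr' hEq) hA
  rw [← this]; ring

open Filter Topology in
lemma aux_zeta_deriv_zero :
    HasDerivAt riemannZeta (-(Real.log (2 * π)) / 2 : ℂ) 0 := by
  set γ' : ℂ := (Real.eulerMascheroniConstant : ℂ) with hγ'
  -- the auxiliary functions
  set h : ℂ → ℂ := fun s => completedRiemannZeta₀ s - 1 / (1 - s) with hh_def
  set g : ℂ → ℂ := fun s => (π : ℂ) ^ (s / 2) / Complex.Gamma (s / 2 + 1) with hg_def
  have hπ : (π : ℂ) ≠ 0 := by exact_mod_cast Real.pi_ne_zero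
  -- derivative of numerator π^(s/2)
  have hp : HasDerivAt (fun s : ℂ => (π : ℂ) ^ (s / 2)) ((Real.log π : ℂ) / 2) 0 := by
    have := ((hasDerivAt_id (0 : ℂ)).div_const 2).const_cpow (c := (π : ℂ)) (Or.inl hπ)
    simp only [id_eq] at this
    convert this using 1
    rw [show ((0 : ℂ) / 2) = 0 by ring, Complex.cpow_zero,
      ← Complex.ofReal_log Real.pi_pos.le]
    ring
  -- derivative of denominator Γ(s/2 + 1)
  have hq : HasDerivAt (fun s : ℂ => Complex.Gamma (s / 2 + 1)) (-γ' / 2) 0 := by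
    have hf : HasDerivAt (fun s : ℂ => s / 2 + 1) (1 / 2) 0 := by
      simpa using ((hasDerivAt_id (0 : ℂ)).div_const 2).add_const 1
    have hΓ : HasDerivAt Complex.Gamma (-γ') ((fun s : ℂ => s / 2 + 1) 0) := by
      simpa using Complex.hasDerivAt_Gamma_one
    have h2 := hΓ.comp 0 hf
    rw [show -γ' / 2 = -γ' * (1 / 2) by ring]
    exact h2
  have hq0 : Complex.Gamma ((0 : ℂ) / 2 + 1) = 1 := by
    norm_num [Complex.Gamma_one]
  -- derivative of g
  have hg : HasDerivAt g ((Real.log π : ℂ) / 2 + γ' / 2) 0 := by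
    have h3 := hp.div hq (by rw [hq0]; exact one_ne_zero)
    rw [hg_def]
    have h4 : ((Real.log π : ℂ) / 2 + γ' / 2) = ((↑(Real.log π) / 2 * Complex.Gamma (0 / 2 + 1) -
        ↑π ^ ((0 : ℂ) / 2) * (-γ' / 2)) / Complex.Gamma (0 / 2 + 1) ^ 2) := by
      rw [hq0, show ((0 : ℂ) / 2) = 0 by ring, Complex.cpow_zero]
      ring
    rw [h4]; exact h3
  -- derivative of h (value irrelevant)
  have hh : DifferentiableAt ℂ h 0 := by
    apply (differentiable_completedZeta₀ 0).sub
    apply DifferentiableAt.div (differentiableAt_const _)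
    · fun_prop
    · norm_num
  set d : ℂ := deriv h 0 with hd_def
  have hh' : HasDerivAt h d 0 := hh.hasDerivAt
  have hu : HasDerivAt (fun s : ℂ => s / 2) ((1 : ℂ) / 2) 0 := by
    simpa using (hasDerivAt_id (0 : ℂ)).div_const 2
  -- F and its derivative
  set F : ℂ → ℂ := fun s => h s * (s / 2) * g s - 1 / 2 * g s with hF_def
  have hg00 : g 0 = 1 := by
    rw [hg_def]; simp only []
    rw [show ((0 : ℂ) / 2) = 0 by ring] at hq0 ⊢
    rw [Complex.cpow_zero]
    simp [Complex.Gamma_one]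
  have hF : HasDerivAt F (h 0 / 2 - 1 / 2 * ((Real.log π : ℂ) / 2 + γ' / 2)) 0 := by
    have h1 := ((hh'.mul hu).mul hg).sub (hg.const_mul (1 / 2))
    have hv : (d * ((0 : ℂ) / 2) + h 0 * (1 / 2)) * g 0 +
        h 0 * ((0 : ℂ) / 2) * ((Real.log π : ℂ) / 2 + γ' / 2) -
        1 / 2 * ((Real.log π : ℂ) / 2 + γ' / 2) =
        h 0 / 2 - 1 / 2 * ((Real.log π : ℂ) / 2 + γ' / 2) := by
      rw [hg00]; ring
    rw [← hv]
    exact h1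
  -- riemannZeta agrees with F near 0
  have hEq : riemannZeta =ᶠ[nhds (0 : ℂ)] F := by
    filter_upwards [Metric.ball_mem_nhds (0 : ℂ) (by norm_num : (0:ℝ) < 1/2)] with s hs
    have hnorm : ‖s‖ < 1 / 2 := by simpa [Complex.dist_eq] using hs
    rcases eq_or_ne s 0 with rfl | hs0
    · rw [riemannZeta_zero, hF_def]
      simp only []
      rw [hg00]
      ring
    · -- s ≠ 0
      have hshalf : s / 2 ≠ 0 := div_ne_zero hs0 two_ne_zero
      have hΓne : Complex.Gamma (s / 2) ≠ 0 := by
        apply Complex.Gamma_ne_zero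
        intro m hm
        rcases m with - | m
        · simp at hm; exact hs0 (by simpa using hm)
        · have h1 : ‖s / 2‖ < 1 := by
            rw [norm_div]
            simp only [Complex.norm_ofNat]
            linarith [hnorm]
          rw [hm] at h1
          simp only [norm_neg] at h1
          have : (1 : ℝ) ≤ ‖((m + 1 : ℕ) : ℂ)‖ := by
            rw [Complex.norm_natCast]
            exact_mod_cast Nat.one_le_iff_ne_zero.mpr (Nat.succ_ne_zero m)
          push_cast at this h1
          linarith
      have hpow : (π : ℂ) ^ (s / 2) ≠ 0 := by
        rw [Complex.cpow_def_of_ne_zero hπ]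
        exact Complex.exp_ne_zero _
      have hΓadd : Complex.Gamma (s / 2 + 1) = s / 2 * Complex.Gamma (s / 2) :=
        Complex.Gamma_add_one _ hshalf
      have hζ : riemannZeta s = completedRiemannZeta s / Gammaℝ s :=
        riemannZeta_def_of_ne_zero hs0
      have hΓℝ : Gammaℝ s = ((π : ℂ) ^ (s / 2))⁻¹ * Complex.Gamma (s / 2) := by
        rw [Complex.Gammaℝ_def, neg_div, Complex.cpow_neg]
      rw [hζ, completedRiemannZeta_eq, hΓℝ, hF_def, hg_def]
      simp only []
      rw [hΓadd]
      field_simp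
      ring
  have hF' : HasDerivAt riemannZeta
      (h 0 / 2 - 1 / 2 * ((Real.log π : ℂ) / 2 + γ' / 2)) 0 :=
    hF.congr_of_eventuallyEq hEq
  -- evaluate h 0 using the functional equation and aux_lambda0_one
  have hΛ00 : completedRiemannZeta₀ 0 = completedRiemannZeta₀ 1 := by
    simpa using completedRiemannZeta₀_one_sub 1
  have hh0 : h 0 = γ' - (γ' + Real.log (4 * π)) / 2 := by
    rw [hh_def]
    simp only []
    rw [hΛ00, aux_lambda0_one]
    norm_num
    rfl
  -- final arithmetic
  have hval : h 0 / 2 - 1 / 2 * ((Real.log π : ℂ) / 2 + γ' / 2) =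
      -(Real.log (2 * π)) / 2 := by
    rw [hh0]
    have l1 : Real.log (4 * π) = 2 * Real.log 2 + Real.log π := by
      rw [show (4 : ℝ) * π = 2 * 2 * π by ring, Real.log_mul (by norm_num) Real.pi_ne_zero,
        Real.log_mul two_ne_zero two_ne_zero]
      ring
    have l2 : Real.log (2 * π) = Real.log 2 + Real.log π :=
      Real.log_mul two_ne_zero Real.pi_ne_zero
    rw [l1, l2]
    push_cast
    ring
  rw [← hval]
  exact hF'

/-- The constant `B` in the Hadamard product for `ξ`: if `B` satisfies the
logarithmic-derivative identity
`ζ'(s)/ζ(s) = B − 1/(s−1) + (1/2) log π − (1/2) ψ(s/2 + 1) + Σ_ρ (1/(s−ρ) + 1/ρ)`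
at `s = 0` (where the sum over zeros, `Z`, vanishes), then
`B = log 2 + (1/2) log π − 1 − γ/2`. -/
theorem hadamard_constant_B (B : ℂ) (Z : ℂ → ℂ) (hZ : Z 0 = 0)
    (heq : deriv riemannZeta 0 / riemannZeta 0 =
      B - 1 / ((0 : ℂ) - 1) + (1 / 2) * Real.log π -
        (1 / 2) * _root_.digamma ((0 : ℂ) / 2 + 1) + Z 0) :
    B = Real.log 2 + (1 / 2) * Real.log π - 1 -
      (Real.eulerMascheroniConstant : ℂ) / 2 := by
  have hd : deriv riemannZeta 0 = -(Real.log (2 * π)) / 2 := aux_zeta_deriv_zero.deriv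
  have hψ : _root_.digamma ((0 : ℂ) / 2 + 1) = -(Real.eulerMascheroniConstant : ℂ) := by
    have h0 : ((0 : ℂ) / 2 + 1) = 1 := by ring
    rw [_root_.digamma, h0, Complex.hasDerivAt_Gamma_one.deriv, Complex.Gamma_one, div_one]
  rw [hd, hψ, hZ, riemannZeta_zero] at heq
  have hlog : (Real.log (2 * π) : ℂ) = Real.log 2 + Real.log π := by
    rw [Real.log_mul two_ne_zero Real.pi_ne_zero]; push_cast; ring
  rw [hlog] at heq
  have h2 : (-(((Real.log 2 : ℂ)) + Real.log π) / 2) / (-1 / 2) =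
      (Real.log 2 : ℂ) + Real.log π := by ring
  rw [h2] at heq
  linear_combination -heq
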